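/- For all z ∈ ℂ with z²−z+1 ≠ 0 and z³ ≠ 1, one has 𝓡₁₂(z)^{t₁}·R₂₁(z)^{t₁} = I₉; equivalently, the explicit matrix 𝓡(z) equals [((R₂₁(z))^{t₁})⁻¹]^{t₁}. -/

import Mathlib

open Matrix Kronecker

noncomputable section

abbrev Idx9 := Fin 3 × Fin 3

def flipP : Matrix Idx9 Idx9 ℂ := fun p q => if p.1 = q.2 ∧ p.2 = q.1 then 1 else 0

def RD3 (z : ℂ) : Matrix Idx9 Idx9 ℂ := fun p q =>
  let pf := z * (z - 1) / (z ^ 2 - z + 1)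
  let qf := z / (z ^ 2 - z + 1)
  let rf := (1 - z) / (z ^ 2 - z + 1)
  match p, q with
  | (0,0), (0,0) => 1
  | (1,1), (1,1) => 1
  | (2,2), (2,2) => 1
  | (0,1), (0,2) => pf
  | (0,2), (0,1) => pf
  | (1,0), (1,2) => pf
  | (1,2), (1,0) => pf
  | (2,0), (2,1) => pf
  | (2,1), (2,0) => pf
  | (0,1), (1,0) => qf
  | (0,2), (2,0) => qf
  | (1,0), (0,1) => qf
  | (1,2), (2,1) => qf
  | (2,0), (0,2) => qf
  | (2,1), (1,2) => qf
  | (0,1), (2,1) => rf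
  | (0,2), (1,2) => rf
  | (1,0), (2,0) => rf
  | (1,2), (0,2) => rf
  | (2,0), (1,0) => rf
  | (2,1), (0,1) => rf
  | _, _ => 0

def MD3 (z : ℂ) : Matrix Idx9 Idx9 ℂ := fun p q =>
  match p, q with
  | (0,0), (0,0) => z ^ 2 + 1
  | (1,1), (1,1) => z ^ 2 + 1
  | (2,2), (2,2) => z ^ 2 + 1
  | (0,0), (1,1) => z
  | (0,0), (2,2) => z
  | (1,1), (0,0) => z
  | (1,1), (2,2) => z
  | (2,2), (0,0) => z
  | (2,2), (1,1) => z
  | (0,1), (0,2) => 1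
  | (0,2), (0,1) => 1
  | (1,0), (1,2) => 1
  | (1,2), (1,0) => 1
  | (2,0), (2,1) => 1
  | (2,1), (2,0) => 1
  | (0,1), (1,0) => -z
  | (0,2), (2,0) => -z
  | (1,0), (0,1) => -z
  | (1,2), (2,1) => -z
  | (2,0), (0,2) => -z
  | (2,1), (1,2) => -z
  | (0,1), (2,1) => z ^ 2
  | (0,2), (1,2) => z ^ 2
  | (1,0), (2,0) => z ^ 2
  | (1,2), (0,2) => z ^ 2
  | (2,0), (1,0) => z ^ 2
  | (2,1), (0,1) => z ^ 2
  | _, _ => 0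

def curlR (z : ℂ) : Matrix Idx9 Idx9 ℂ :=
  ((z ^ 2 - z + 1) / ((z - 1) * (z ^ 3 - 1))) • MD3 z

def pt1 (A : Matrix Idx9 Idx9 ℂ) : Matrix Idx9 Idx9 ℂ :=
  fun p q => A (q.1, p.2) (p.1, q.2)

/-- The reflection equation (RE−). -/
def REminus (K : ℂ → Matrix (Fin 3) (Fin 3) ℂ) : Prop :=
  ∀ x y : ℂ, x ≠ 0 → y ≠ 0 →
    (x * y⁻¹) ^ 2 - x * y⁻¹ + 1 ≠ 0 → (x * y) ^ 2 - x * y + 1 ≠ 0 →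
    RD3 (x * y⁻¹) * (K x ⊗ₖ (1 : Matrix (Fin 3) (Fin 3) ℂ)) *
        (flipP * RD3 (x * y) * flipP) * ((1 : Matrix (Fin 3) (Fin 3) ℂ) ⊗ₖ K y)
      = ((1 : Matrix (Fin 3) (Fin 3) ℂ) ⊗ₖ K y) * RD3 (x * y) *
          (K x ⊗ₖ (1 : Matrix (Fin 3) (Fin 3) ℂ)) * (flipP * RD3 (x * y⁻¹) * flipP)

/-- The dual reflection equation (RE+). -/
def REplus (K : ℂ → Matrix (Fin 3) (Fin 3) ℂ) : Prop :=
  ∀ x y : ℂ, x ≠ 0 → y ≠ 0 →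
    (y * x⁻¹) ^ 2 - y * x⁻¹ + 1 ≠ 0 → (x * y) ^ 3 ≠ 1 →
    RD3 (y * x⁻¹) * (K x ⊗ₖ (1 : Matrix (Fin 3) (Fin 3) ℂ)) *
        (flipP * curlR (x * y) * flipP) * ((1 : Matrix (Fin 3) (Fin 3) ℂ) ⊗ₖ K y)
      = ((1 : Matrix (Fin 3) (Fin 3) ℂ) ⊗ₖ K y) * curlR (x * y) *
          (K x ⊗ₖ (1 : Matrix (Fin 3) (Fin 3) ℂ)) * (flipP * RD3 (y * x⁻¹) * flipP)

def StarCond (h : ZMod 3 → ZMod 3 → ℂ → ℂ) (z₀ : ℂ) : Prop :=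
  ∀ (i j k l : ZMod 3) (y : ℂ),
    h i j z₀ * h k l y = h i (j + k + 2 * l) z₀ * h (2 * i + 2 * k) (2 * i + 2 * l) y

def NonDiag (h : ZMod 3 → ZMod 3 → ℂ → ℂ) : Prop :=
  ∃ (i j : ZMod 3) (y : ℂ), i ≠ j ∧ h i j y ≠ 0

def Kof (h : ZMod 3 → ZMod 3 → ℂ → ℂ) (z : ℂ) : Matrix (Fin 3) (Fin 3) ℂ :=
  fun a b => h (((a : ℕ) : ZMod 3) + 1) (((b : ℕ) : ZMod 3) + 1) z

@[simp] lemma RD3_0000 (z : ℂ) : RD3 z (0,0) (0,0) = 1 := rfl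
@[simp] lemma RD3_0001 (z : ℂ) : RD3 z (0,0) (0,1) = 0 := rfl
@[simp] lemma RD3_0002 (z : ℂ) : RD3 z (0,0) (0,2) = 0 := rfl
@[simp] lemma RD3_0010 (z : ℂ) : RD3 z (0,0) (1,0) = 0 := rfl
@[simp] lemma RD3_0011 (z : ℂ) : RD3 z (0,0) (1,1) = 0 := rfl
@[simp] lemma RD3_0012 (z : ℂ) : RD3 z (0,0) (1,2) = 0 := rfl
@[simp] lemma RD3_0020 (z : ℂ) : RD3 z (0,0) (2,0) = 0 := rfl
@[simp] lemma RD3_0021 (z : ℂ) : RD3 z (0,0) (2,1) = 0 := rfl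
@[simp] lemma RD3_0022 (z : ℂ) : RD3 z (0,0) (2,2) = 0 := rfl
@[simp] lemma RD3_0100 (z : ℂ) : RD3 z (0,1) (0,0) = 0 := rfl
@[simp] lemma RD3_0101 (z : ℂ) : RD3 z (0,1) (0,1) = 0 := rfl
@[simp] lemma RD3_0102 (z : ℂ) : RD3 z (0,1) (0,2) = (z * (z - 1) / (z ^ 2 - z + 1)) := rfl
@[simp] lemma RD3_0110 (z : ℂ) : RD3 z (0,1) (1,0) = (z / (z ^ 2 - z + 1)) := rfl
@[simp] lemma RD3_0111 (z : ℂ) : RD3 z (0,1) (1,1) = 0 := rfl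
@[simp] lemma RD3_0112 (z : ℂ) : RD3 z (0,1) (1,2) = 0 := rfl
@[simp] lemma RD3_0120 (z : ℂ) : RD3 z (0,1) (2,0) = 0 := rfl
@[simp] lemma RD3_0121 (z : ℂ) : RD3 z (0,1) (2,1) = ((1 - z) / (z ^ 2 - z + 1)) := rfl
@[simp] lemma RD3_0122 (z : ℂ) : RD3 z (0,1) (2,2) = 0 := rfl
@[simp] lemma RD3_0200 (z : ℂ) : RD3 z (0,2) (0,0) = 0 := rfl
@[simp] lemma RD3_0201 (z : ℂ) : RD3 z (0,2) (0,1) = (z * (z - 1) / (z ^ 2 - z + 1)) := rfl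
@[simp] lemma RD3_0202 (z : ℂ) : RD3 z (0,2) (0,2) = 0 := rfl
@[simp] lemma RD3_0210 (z : ℂ) : RD3 z (0,2) (1,0) = 0 := rfl
@[simp] lemma RD3_0211 (z : ℂ) : RD3 z (0,2) (1,1) = 0 := rfl
@[simp] lemma RD3_0212 (z : ℂ) : RD3 z (0,2) (1,2) = ((1 - z) / (z ^ 2 - z + 1)) := rfl
@[simp] lemma RD3_0220 (z : ℂ) : RD3 z (0,2) (2,0) = (z / (z ^ 2 - z + 1)) := rfl
@[simp] lemma RD3_0221 (z : ℂ) : RD3 z (0,2) (2,1) = 0 := rfl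
@[simp] lemma RD3_0222 (z : ℂ) : RD3 z (0,2) (2,2) = 0 := rfl
@[simp] lemma RD3_1000 (z : ℂ) : RD3 z (1,0) (0,0) = 0 := rfl
@[simp] lemma RD3_1001 (z : ℂ) : RD3 z (1,0) (0,1) = (z / (z ^ 2 - z + 1)) := rfl
@[simp] lemma RD3_1002 (z : ℂ) : RD3 z (1,0) (0,2) = 0 := rfl
@[simp] lemma RD3_1010 (z : ℂ) : RD3 z (1,0) (1,0) = 0 := rfl
@[simp] lemma RD3_1011 (z : ℂ) : RD3 z (1,0) (1,1) = 0 := rfl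
@[simp] lemma RD3_1012 (z : ℂ) : RD3 z (1,0) (1,2) = (z * (z - 1) / (z ^ 2 - z + 1)) := rfl
@[simp] lemma RD3_1020 (z : ℂ) : RD3 z (1,0) (2,0) = ((1 - z) / (z ^ 2 - z + 1)) := rfl
@[simp] lemma RD3_1021 (z : ℂ) : RD3 z (1,0) (2,1) = 0 := rfl
@[simp] lemma RD3_1022 (z : ℂ) : RD3 z (1,0) (2,2) = 0 := rfl
@[simp] lemma RD3_1100 (z : ℂ) : RD3 z (1,1) (0,0) = 0 := rfl
@[simp] lemma RD3_1101 (z : ℂ) : RD3 z (1,1) (0,1) = 0 := rfl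
@[simp] lemma RD3_1102 (z : ℂ) : RD3 z (1,1) (0,2) = 0 := rfl
@[simp] lemma RD3_1110 (z : ℂ) : RD3 z (1,1) (1,0) = 0 := rfl
@[simp] lemma RD3_1111 (z : ℂ) : RD3 z (1,1) (1,1) = 1 := rfl
@[simp] lemma RD3_1112 (z : ℂ) : RD3 z (1,1) (1,2) = 0 := rfl
@[simp] lemma RD3_1120 (z : ℂ) : RD3 z (1,1) (2,0) = 0 := rfl
@[simp] lemma RD3_1121 (z : ℂ) : RD3 z (1,1) (2,1) = 0 := rfl
@[simp] lemma RD3_1122 (z : ℂ) : RD3 z (1,1) (2,2) = 0 := rfl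
@[simp] lemma RD3_1200 (z : ℂ) : RD3 z (1,2) (0,0) = 0 := rfl
@[simp] lemma RD3_1201 (z : ℂ) : RD3 z (1,2) (0,1) = 0 := rfl
@[simp] lemma RD3_1202 (z : ℂ) : RD3 z (1,2) (0,2) = ((1 - z) / (z ^ 2 - z + 1)) := rfl
@[simp] lemma RD3_1210 (z : ℂ) : RD3 z (1,2) (1,0) = (z * (z - 1) / (z ^ 2 - z + 1)) := rfl
@[simp] lemma RD3_1211 (z : ℂ) : RD3 z (1,2) (1,1) = 0 := rfl
@[simp] lemma RD3_1212 (z : ℂ) : RD3 z (1,2) (1,2) = 0 := rfl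
@[simp] lemma RD3_1220 (z : ℂ) : RD3 z (1,2) (2,0) = 0 := rfl
@[simp] lemma RD3_1221 (z : ℂ) : RD3 z (1,2) (2,1) = (z / (z ^ 2 - z + 1)) := rfl
@[simp] lemma RD3_1222 (z : ℂ) : RD3 z (1,2) (2,2) = 0 := rfl
@[simp] lemma RD3_2000 (z : ℂ) : RD3 z (2,0) (0,0) = 0 := rfl
@[simp] lemma RD3_2001 (z : ℂ) : RD3 z (2,0) (0,1) = 0 := rfl
@[simp] lemma RD3_2002 (z : ℂ) : RD3 z (2,0) (0,2) = (z / (z ^ 2 - z + 1)) := rfl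
@[simp] lemma RD3_2010 (z : ℂ) : RD3 z (2,0) (1,0) = ((1 - z) / (z ^ 2 - z + 1)) := rfl
@[simp] lemma RD3_2011 (z : ℂ) : RD3 z (2,0) (1,1) = 0 := rfl
@[simp] lemma RD3_2012 (z : ℂ) : RD3 z (2,0) (1,2) = 0 := rfl
@[simp] lemma RD3_2020 (z : ℂ) : RD3 z (2,0) (2,0) = 0 := rfl
@[simp] lemma RD3_2021 (z : ℂ) : RD3 z (2,0) (2,1) = (z * (z - 1) / (z ^ 2 - z + 1)) := rfl
@[simp] lemma RD3_2022 (z : ℂ) : RD3 z (2,0) (2,2) = 0 := rfl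
@[simp] lemma RD3_2100 (z : ℂ) : RD3 z (2,1) (0,0) = 0 := rfl
@[simp] lemma RD3_2101 (z : ℂ) : RD3 z (2,1) (0,1) = ((1 - z) / (z ^ 2 - z + 1)) := rfl
@[simp] lemma RD3_2102 (z : ℂ) : RD3 z (2,1) (0,2) = 0 := rfl
@[simp] lemma RD3_2110 (z : ℂ) : RD3 z (2,1) (1,0) = 0 := rfl
@[simp] lemma RD3_2111 (z : ℂ) : RD3 z (2,1) (1,1) = 0 := rfl
@[simp] lemma RD3_2112 (z : ℂ) : RD3 z (2,1) (1,2) = (z / (z ^ 2 - z + 1)) := rfl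
@[simp] lemma RD3_2120 (z : ℂ) : RD3 z (2,1) (2,0) = (z * (z - 1) / (z ^ 2 - z + 1)) := rfl
@[simp] lemma RD3_2121 (z : ℂ) : RD3 z (2,1) (2,1) = 0 := rfl
@[simp] lemma RD3_2122 (z : ℂ) : RD3 z (2,1) (2,2) = 0 := rfl
@[simp] lemma RD3_2200 (z : ℂ) : RD3 z (2,2) (0,0) = 0 := rfl
@[simp] lemma RD3_2201 (z : ℂ) : RD3 z (2,2) (0,1) = 0 := rfl
@[simp] lemma RD3_2202 (z : ℂ) : RD3 z (2,2) (0,2) = 0 := rfl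
@[simp] lemma RD3_2210 (z : ℂ) : RD3 z (2,2) (1,0) = 0 := rfl
@[simp] lemma RD3_2211 (z : ℂ) : RD3 z (2,2) (1,1) = 0 := rfl
@[simp] lemma RD3_2212 (z : ℂ) : RD3 z (2,2) (1,2) = 0 := rfl
@[simp] lemma RD3_2220 (z : ℂ) : RD3 z (2,2) (2,0) = 0 := rfl
@[simp] lemma RD3_2221 (z : ℂ) : RD3 z (2,2) (2,1) = 0 := rfl
@[simp] lemma RD3_2222 (z : ℂ) : RD3 z (2,2) (2,2) = 1 := rfl
@[simp] lemma MD3_0000 (z : ℂ) : MD3 z (0,0) (0,0) = z ^ 2 + 1 := rfl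
@[simp] lemma MD3_0001 (z : ℂ) : MD3 z (0,0) (0,1) = 0 := rfl
@[simp] lemma MD3_0002 (z : ℂ) : MD3 z (0,0) (0,2) = 0 := rfl
@[simp] lemma MD3_0010 (z : ℂ) : MD3 z (0,0) (1,0) = 0 := rfl
@[simp] lemma MD3_0011 (z : ℂ) : MD3 z (0,0) (1,1) = z := rfl
@[simp] lemma MD3_0012 (z : ℂ) : MD3 z (0,0) (1,2) = 0 := rfl
@[simp] lemma MD3_0020 (z : ℂ) : MD3 z (0,0) (2,0) = 0 := rfl
@[simp] lemma MD3_0021 (z : ℂ) : MD3 z (0,0) (2,1) = 0 := rfl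
@[simp] lemma MD3_0022 (z : ℂ) : MD3 z (0,0) (2,2) = z := rfl
@[simp] lemma MD3_0100 (z : ℂ) : MD3 z (0,1) (0,0) = 0 := rfl
@[simp] lemma MD3_0101 (z : ℂ) : MD3 z (0,1) (0,1) = 0 := rfl
@[simp] lemma MD3_0102 (z : ℂ) : MD3 z (0,1) (0,2) = 1 := rfl
@[simp] lemma MD3_0110 (z : ℂ) : MD3 z (0,1) (1,0) = -z := rfl
@[simp] lemma MD3_0111 (z : ℂ) : MD3 z (0,1) (1,1) = 0 := rfl
@[simp] lemma MD3_0112 (z : ℂ) : MD3 z (0,1) (1,2) = 0 := rfl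
@[simp] lemma MD3_0120 (z : ℂ) : MD3 z (0,1) (2,0) = 0 := rfl
@[simp] lemma MD3_0121 (z : ℂ) : MD3 z (0,1) (2,1) = z ^ 2 := rfl
@[simp] lemma MD3_0122 (z : ℂ) : MD3 z (0,1) (2,2) = 0 := rfl
@[simp] lemma MD3_0200 (z : ℂ) : MD3 z (0,2) (0,0) = 0 := rfl
@[simp] lemma MD3_0201 (z : ℂ) : MD3 z (0,2) (0,1) = 1 := rfl
@[simp] lemma MD3_0202 (z : ℂ) : MD3 z (0,2) (0,2) = 0 := rfl
@[simp] lemma MD3_0210 (z : ℂ) : MD3 z (0,2) (1,0) = 0 := rfl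
@[simp] lemma MD3_0211 (z : ℂ) : MD3 z (0,2) (1,1) = 0 := rfl
@[simp] lemma MD3_0212 (z : ℂ) : MD3 z (0,2) (1,2) = z ^ 2 := rfl
@[simp] lemma MD3_0220 (z : ℂ) : MD3 z (0,2) (2,0) = -z := rfl
@[simp] lemma MD3_0221 (z : ℂ) : MD3 z (0,2) (2,1) = 0 := rfl
@[simp] lemma MD3_0222 (z : ℂ) : MD3 z (0,2) (2,2) = 0 := rfl
@[simp] lemma MD3_1000 (z : ℂ) : MD3 z (1,0) (0,0) = 0 := rfl
@[simp] lemma MD3_1001 (z : ℂ) : MD3 z (1,0) (0,1) = -z := rfl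
@[simp] lemma MD3_1002 (z : ℂ) : MD3 z (1,0) (0,2) = 0 := rfl
@[simp] lemma MD3_1010 (z : ℂ) : MD3 z (1,0) (1,0) = 0 := rfl
@[simp] lemma MD3_1011 (z : ℂ) : MD3 z (1,0) (1,1) = 0 := rfl
@[simp] lemma MD3_1012 (z : ℂ) : MD3 z (1,0) (1,2) = 1 := rfl
@[simp] lemma MD3_1020 (z : ℂ) : MD3 z (1,0) (2,0) = z ^ 2 := rfl
@[simp] lemma MD3_1021 (z : ℂ) : MD3 z (1,0) (2,1) = 0 := rfl
@[simp] lemma MD3_1022 (z : ℂ) : MD3 z (1,0) (2,2) = 0 := rfl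
@[simp] lemma MD3_1100 (z : ℂ) : MD3 z (1,1) (0,0) = z := rfl
@[simp] lemma MD3_1101 (z : ℂ) : MD3 z (1,1) (0,1) = 0 := rfl
@[simp] lemma MD3_1102 (z : ℂ) : MD3 z (1,1) (0,2) = 0 := rfl
@[simp] lemma MD3_1110 (z : ℂ) : MD3 z (1,1) (1,0) = 0 := rfl
@[simp] lemma MD3_1111 (z : ℂ) : MD3 z (1,1) (1,1) = z ^ 2 + 1 := rfl
@[simp] lemma MD3_1112 (z : ℂ) : MD3 z (1,1) (1,2) = 0 := rfl
@[simp] lemma MD3_1120 (z : ℂ) : MD3 z (1,1) (2,0) = 0 := rfl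
@[simp] lemma MD3_1121 (z : ℂ) : MD3 z (1,1) (2,1) = 0 := rfl
@[simp] lemma MD3_1122 (z : ℂ) : MD3 z (1,1) (2,2) = z := rfl
@[simp] lemma MD3_1200 (z : ℂ) : MD3 z (1,2) (0,0) = 0 := rfl
@[simp] lemma MD3_1201 (z : ℂ) : MD3 z (1,2) (0,1) = 0 := rfl
@[simp] lemma MD3_1202 (z : ℂ) : MD3 z (1,2) (0,2) = z ^ 2 := rfl
@[simp] lemma MD3_1210 (z : ℂ) : MD3 z (1,2) (1,0) = 1 := rfl
@[simp] lemma MD3_1211 (z : ℂ) : MD3 z (1,2) (1,1) = 0 := rfl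
@[simp] lemma MD3_1212 (z : ℂ) : MD3 z (1,2) (1,2) = 0 := rfl
@[simp] lemma MD3_1220 (z : ℂ) : MD3 z (1,2) (2,0) = 0 := rfl
@[simp] lemma MD3_1221 (z : ℂ) : MD3 z (1,2) (2,1) = -z := rfl
@[simp] lemma MD3_1222 (z : ℂ) : MD3 z (1,2) (2,2) = 0 := rfl
@[simp] lemma MD3_2000 (z : ℂ) : MD3 z (2,0) (0,0) = 0 := rfl
@[simp] lemma MD3_2001 (z : ℂ) : MD3 z (2,0) (0,1) = 0 := rfl
@[simp] lemma MD3_2002 (z : ℂ) : MD3 z (2,0) (0,2) = -z := rfl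
@[simp] lemma MD3_2010 (z : ℂ) : MD3 z (2,0) (1,0) = z ^ 2 := rfl
@[simp] lemma MD3_2011 (z : ℂ) : MD3 z (2,0) (1,1) = 0 := rfl
@[simp] lemma MD3_2012 (z : ℂ) : MD3 z (2,0) (1,2) = 0 := rfl
@[simp] lemma MD3_2020 (z : ℂ) : MD3 z (2,0) (2,0) = 0 := rfl
@[simp] lemma MD3_2021 (z : ℂ) : MD3 z (2,0) (2,1) = 1 := rfl
@[simp] lemma MD3_2022 (z : ℂ) : MD3 z (2,0) (2,2) = 0 := rfl
@[simp] lemma MD3_2100 (z : ℂ) : MD3 z (2,1) (0,0) = 0 := rfl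
@[simp] lemma MD3_2101 (z : ℂ) : MD3 z (2,1) (0,1) = z ^ 2 := rfl
@[simp] lemma MD3_2102 (z : ℂ) : MD3 z (2,1) (0,2) = 0 := rfl
@[simp] lemma MD3_2110 (z : ℂ) : MD3 z (2,1) (1,0) = 0 := rfl
@[simp] lemma MD3_2111 (z : ℂ) : MD3 z (2,1) (1,1) = 0 := rfl
@[simp] lemma MD3_2112 (z : ℂ) : MD3 z (2,1) (1,2) = -z := rfl
@[simp] lemma MD3_2120 (z : ℂ) : MD3 z (2,1) (2,0) = 1 := rfl
@[simp] lemma MD3_2121 (z : ℂ) : MD3 z (2,1) (2,1) = 0 := rfl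
@[simp] lemma MD3_2122 (z : ℂ) : MD3 z (2,1) (2,2) = 0 := rfl
@[simp] lemma MD3_2200 (z : ℂ) : MD3 z (2,2) (0,0) = z := rfl
@[simp] lemma MD3_2201 (z : ℂ) : MD3 z (2,2) (0,1) = 0 := rfl
@[simp] lemma MD3_2202 (z : ℂ) : MD3 z (2,2) (0,2) = 0 := rfl
@[simp] lemma MD3_2210 (z : ℂ) : MD3 z (2,2) (1,0) = 0 := rfl
@[simp] lemma MD3_2211 (z : ℂ) : MD3 z (2,2) (1,1) = z := rfl
@[simp] lemma MD3_2212 (z : ℂ) : MD3 z (2,2) (1,2) = 0 := rfl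
@[simp] lemma MD3_2220 (z : ℂ) : MD3 z (2,2) (2,0) = 0 := rfl
@[simp] lemma MD3_2221 (z : ℂ) : MD3 z (2,2) (2,1) = 0 := rfl
@[simp] lemma MD3_2222 (z : ℂ) : MD3 z (2,2) (2,2) = z ^ 2 + 1 := rfl

def RN (z : ℂ) : Matrix Idx9 Idx9 ℂ := fun p q =>
  match p, q with
  | (0,0), (0,0) => (z ^ 2 - z + 1)
  | (1,1), (1,1) => (z ^ 2 - z + 1)
  | (2,2), (2,2) => (z ^ 2 - z + 1)
  | (0,1), (0,2) => (z * (z - 1))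
  | (0,2), (0,1) => (z * (z - 1))
  | (1,0), (1,2) => (z * (z - 1))
  | (1,2), (1,0) => (z * (z - 1))
  | (2,0), (2,1) => (z * (z - 1))
  | (2,1), (2,0) => (z * (z - 1))
  | (0,1), (1,0) => z
  | (0,2), (2,0) => z
  | (1,0), (0,1) => z
  | (1,2), (2,1) => z
  | (2,0), (0,2) => z
  | (2,1), (1,2) => z
  | (0,1), (2,1) => (1 - z)
  | (0,2), (1,2) => (1 - z)
  | (1,0), (2,0) => (1 - z)
  | (1,2), (0,2) => (1 - z)
  | (2,0), (1,0) => (1 - z)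
  | (2,1), (0,1) => (1 - z)
  | _, _ => 0

@[simp] lemma RN_0000 (z : ℂ) : RN z (0,0) (0,0) = (z ^ 2 - z + 1) := rfl
@[simp] lemma RN_0001 (z : ℂ) : RN z (0,0) (0,1) = 0 := rfl
@[simp] lemma RN_0002 (z : ℂ) : RN z (0,0) (0,2) = 0 := rfl
@[simp] lemma RN_0010 (z : ℂ) : RN z (0,0) (1,0) = 0 := rfl
@[simp] lemma RN_0011 (z : ℂ) : RN z (0,0) (1,1) = 0 := rfl
@[simp] lemma RN_0012 (z : ℂ) : RN z (0,0) (1,2) = 0 := rfl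
@[simp] lemma RN_0020 (z : ℂ) : RN z (0,0) (2,0) = 0 := rfl
@[simp] lemma RN_0021 (z : ℂ) : RN z (0,0) (2,1) = 0 := rfl
@[simp] lemma RN_0022 (z : ℂ) : RN z (0,0) (2,2) = 0 := rfl
@[simp] lemma RN_0100 (z : ℂ) : RN z (0,1) (0,0) = 0 := rfl
@[simp] lemma RN_0101 (z : ℂ) : RN z (0,1) (0,1) = 0 := rfl
@[simp] lemma RN_0102 (z : ℂ) : RN z (0,1) (0,2) = (z * (z - 1)) := rfl
@[simp] lemma RN_0110 (z : ℂ) : RN z (0,1) (1,0) = z := rfl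
@[simp] lemma RN_0111 (z : ℂ) : RN z (0,1) (1,1) = 0 := rfl
@[simp] lemma RN_0112 (z : ℂ) : RN z (0,1) (1,2) = 0 := rfl
@[simp] lemma RN_0120 (z : ℂ) : RN z (0,1) (2,0) = 0 := rfl
@[simp] lemma RN_0121 (z : ℂ) : RN z (0,1) (2,1) = (1 - z) := rfl
@[simp] lemma RN_0122 (z : ℂ) : RN z (0,1) (2,2) = 0 := rfl
@[simp] lemma RN_0200 (z : ℂ) : RN z (0,2) (0,0) = 0 := rfl
@[simp] lemma RN_0201 (z : ℂ) : RN z (0,2) (0,1) = (z * (z - 1)) := rfl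
@[simp] lemma RN_0202 (z : ℂ) : RN z (0,2) (0,2) = 0 := rfl
@[simp] lemma RN_0210 (z : ℂ) : RN z (0,2) (1,0) = 0 := rfl
@[simp] lemma RN_0211 (z : ℂ) : RN z (0,2) (1,1) = 0 := rfl
@[simp] lemma RN_0212 (z : ℂ) : RN z (0,2) (1,2) = (1 - z) := rfl
@[simp] lemma RN_0220 (z : ℂ) : RN z (0,2) (2,0) = z := rfl
@[simp] lemma RN_0221 (z : ℂ) : RN z (0,2) (2,1) = 0 := rfl
@[simp] lemma RN_0222 (z : ℂ) : RN z (0,2) (2,2) = 0 := rfl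
@[simp] lemma RN_1000 (z : ℂ) : RN z (1,0) (0,0) = 0 := rfl
@[simp] lemma RN_1001 (z : ℂ) : RN z (1,0) (0,1) = z := rfl
@[simp] lemma RN_1002 (z : ℂ) : RN z (1,0) (0,2) = 0 := rfl
@[simp] lemma RN_1010 (z : ℂ) : RN z (1,0) (1,0) = 0 := rfl
@[simp] lemma RN_1011 (z : ℂ) : RN z (1,0) (1,1) = 0 := rfl
@[simp] lemma RN_1012 (z : ℂ) : RN z (1,0) (1,2) = (z * (z - 1)) := rfl
@[simp] lemma RN_1020 (z : ℂ) : RN z (1,0) (2,0) = (1 - z) := rfl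
@[simp] lemma RN_1021 (z : ℂ) : RN z (1,0) (2,1) = 0 := rfl
@[simp] lemma RN_1022 (z : ℂ) : RN z (1,0) (2,2) = 0 := rfl
@[simp] lemma RN_1100 (z : ℂ) : RN z (1,1) (0,0) = 0 := rfl
@[simp] lemma RN_1101 (z : ℂ) : RN z (1,1) (0,1) = 0 := rfl
@[simp] lemma RN_1102 (z : ℂ) : RN z (1,1) (0,2) = 0 := rfl
@[simp] lemma RN_1110 (z : ℂ) : RN z (1,1) (1,0) = 0 := rfl
@[simp] lemma RN_1111 (z : ℂ) : RN z (1,1) (1,1) = (z ^ 2 - z + 1) := rfl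
@[simp] lemma RN_1112 (z : ℂ) : RN z (1,1) (1,2) = 0 := rfl
@[simp] lemma RN_1120 (z : ℂ) : RN z (1,1) (2,0) = 0 := rfl
@[simp] lemma RN_1121 (z : ℂ) : RN z (1,1) (2,1) = 0 := rfl
@[simp] lemma RN_1122 (z : ℂ) : RN z (1,1) (2,2) = 0 := rfl
@[simp] lemma RN_1200 (z : ℂ) : RN z (1,2) (0,0) = 0 := rfl
@[simp] lemma RN_1201 (z : ℂ) : RN z (1,2) (0,1) = 0 := rfl
@[simp] lemma RN_1202 (z : ℂ) : RN z (1,2) (0,2) = (1 - z) := rfl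
@[simp] lemma RN_1210 (z : ℂ) : RN z (1,2) (1,0) = (z * (z - 1)) := rfl
@[simp] lemma RN_1211 (z : ℂ) : RN z (1,2) (1,1) = 0 := rfl
@[simp] lemma RN_1212 (z : ℂ) : RN z (1,2) (1,2) = 0 := rfl
@[simp] lemma RN_1220 (z : ℂ) : RN z (1,2) (2,0) = 0 := rfl
@[simp] lemma RN_1221 (z : ℂ) : RN z (1,2) (2,1) = z := rfl
@[simp] lemma RN_1222 (z : ℂ) : RN z (1,2) (2,2) = 0 := rfl
@[simp] lemma RN_2000 (z : ℂ) : RN z (2,0) (0,0) = 0 := rfl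
@[simp] lemma RN_2001 (z : ℂ) : RN z (2,0) (0,1) = 0 := rfl
@[simp] lemma RN_2002 (z : ℂ) : RN z (2,0) (0,2) = z := rfl
@[simp] lemma RN_2010 (z : ℂ) : RN z (2,0) (1,0) = (1 - z) := rfl
@[simp] lemma RN_2011 (z : ℂ) : RN z (2,0) (1,1) = 0 := rfl
@[simp] lemma RN_2012 (z : ℂ) : RN z (2,0) (1,2) = 0 := rfl
@[simp] lemma RN_2020 (z : ℂ) : RN z (2,0) (2,0) = 0 := rfl
@[simp] lemma RN_2021 (z : ℂ) : RN z (2,0) (2,1) = (z * (z - 1)) := rfl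
@[simp] lemma RN_2022 (z : ℂ) : RN z (2,0) (2,2) = 0 := rfl
@[simp] lemma RN_2100 (z : ℂ) : RN z (2,1) (0,0) = 0 := rfl
@[simp] lemma RN_2101 (z : ℂ) : RN z (2,1) (0,1) = (1 - z) := rfl
@[simp] lemma RN_2102 (z : ℂ) : RN z (2,1) (0,2) = 0 := rfl
@[simp] lemma RN_2110 (z : ℂ) : RN z (2,1) (1,0) = 0 := rfl
@[simp] lemma RN_2111 (z : ℂ) : RN z (2,1) (1,1) = 0 := rfl
@[simp] lemma RN_2112 (z : ℂ) : RN z (2,1) (1,2) = z := rfl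
@[simp] lemma RN_2120 (z : ℂ) : RN z (2,1) (2,0) = (z * (z - 1)) := rfl
@[simp] lemma RN_2121 (z : ℂ) : RN z (2,1) (2,1) = 0 := rfl
@[simp] lemma RN_2122 (z : ℂ) : RN z (2,1) (2,2) = 0 := rfl
@[simp] lemma RN_2200 (z : ℂ) : RN z (2,2) (0,0) = 0 := rfl
@[simp] lemma RN_2201 (z : ℂ) : RN z (2,2) (0,1) = 0 := rfl
@[simp] lemma RN_2202 (z : ℂ) : RN z (2,2) (0,2) = 0 := rfl
@[simp] lemma RN_2210 (z : ℂ) : RN z (2,2) (1,0) = 0 := rfl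
@[simp] lemma RN_2211 (z : ℂ) : RN z (2,2) (1,1) = 0 := rfl
@[simp] lemma RN_2212 (z : ℂ) : RN z (2,2) (1,2) = 0 := rfl
@[simp] lemma RN_2220 (z : ℂ) : RN z (2,2) (2,0) = 0 := rfl
@[simp] lemma RN_2221 (z : ℂ) : RN z (2,2) (2,1) = 0 := rfl
@[simp] lemma RN_2222 (z : ℂ) : RN z (2,2) (2,2) = (z ^ 2 - z + 1) := rfl

set_option maxHeartbeats 1000000 in
lemma core (z : ℂ) :
    (Matrix.of fun p q => MD3 z (q.1, p.2) (p.1, q.2)) * (Matrix.of fun p q => RN z (p.2, q.1) (q.2, p.1))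
      = ((z - 1) * (z ^ 3 - 1)) • (1 : Matrix Idx9 Idx9 ℂ) := by
  ext p q
  obtain ⟨i,j⟩ := p; obtain ⟨k,l⟩ := q
  fin_cases i <;> fin_cases j <;> fin_cases k <;> fin_cases l <;>
    simp [Matrix.mul_apply, Fintype.sum_prod_type, Fin.sum_univ_three, Matrix.one_apply,
      Prod.ext_iff, -Prod.mk_zero_zero, -Prod.mk_one_one] <;> ring

lemma flipP_apply (p q : Idx9) : flipP p q = if q = (p.2, p.1) then (1:ℂ) else 0 := by
  rcases p with ⟨a,b⟩; rcases q with ⟨c,d⟩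
  simp only [flipP, Prod.mk.injEq]
  by_cases h1 : a = d <;> by_cases h2 : b = c <;> simp [h1, h2, eq_comm]

lemma flipP_apply' (p q : Idx9) : flipP p q = if p = (q.2, q.1) then (1:ℂ) else 0 := by
  rw [flipP_apply]
  rcases p with ⟨a,b⟩; rcases q with ⟨c,d⟩
  simp [Prod.ext_iff, and_comm, eq_comm]

lemma flip_conj (A : Matrix Idx9 Idx9 ℂ) :
    flipP * A * flipP = Matrix.of fun p q => A (p.2, p.1) (q.2, q.1) := by
  ext p q
  rw [Matrix.mul_apply]
  simp only [Matrix.mul_apply, flipP_apply, flipP_apply', ite_mul, one_mul, zero_mul,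
    mul_ite, mul_one, mul_zero, Finset.sum_ite_eq', Finset.mem_univ, if_true]
  have hc : ∀ x : Idx9, (q = (x.2, x.1)) = (x = (q.2, q.1)) := by
    rintro ⟨a,b⟩; rcases q with ⟨c,d⟩; simp [Prod.ext_iff]; tauto
  simp only [hc, Finset.sum_ite_eq', Finset.mem_univ, if_true, Matrix.of_apply]

lemma hRD3 (z : ℂ) (h1 : z ^ 2 - z + 1 ≠ 0) : RD3 z = (z ^ 2 - z + 1)⁻¹ • RN z := by
  ext p q
  obtain ⟨i,j⟩ := p; obtain ⟨k,l⟩ := q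
  fin_cases i <;> fin_cases j <;> fin_cases k <;> fin_cases l <;>
    simp [-Prod.mk_zero_zero, -Prod.mk_one_one, Matrix.smul_apply, smul_eq_mul,
      div_eq_inv_mul, inv_mul_cancel₀ h1]

lemma part1 (z : ℂ) (h1 : z ^ 2 - z + 1 ≠ 0) (h2 : z ^ 3 ≠ 1) :
    pt1 (curlR z) * pt1 (flipP * RD3 z * flipP) = (1 : Matrix Idx9 Idx9 ℂ) := by
  have hz1 : z - 1 ≠ 0 := by
    intro h
    apply h2
    have hz : z = 1 := by linear_combination h
    rw [hz]; ring
  have hz3 : z ^ 3 - 1 ≠ 0 := sub_ne_zero.mpr h2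
  have e1 : pt1 (curlR z)
      = ((z ^ 2 - z + 1) / ((z - 1) * (z ^ 3 - 1))) •
        (Matrix.of fun p q => MD3 z (q.1, p.2) (p.1, q.2)) := rfl
  have e2 : pt1 (flipP * RD3 z * flipP)
      = (z ^ 2 - z + 1)⁻¹ • (Matrix.of fun p q => RN z (p.2, q.1) (q.2, p.1)) := by
    rw [hRD3 z h1, Matrix.mul_smul, Matrix.smul_mul, flip_conj]
    rfl
  rw [e1, e2, Matrix.smul_mul, Matrix.mul_smul, core, smul_smul, smul_smul]
  have : (z ^ 2 - z + 1) / ((z - 1) * (z ^ 3 - 1)) * (z ^ 2 - z + 1)⁻¹ * ((z - 1) * (z ^ 3 - 1))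
      = 1 := by
    rw [div_mul_eq_mul_div, mul_inv_cancel₀ h1, one_div, inv_mul_cancel₀ (mul_ne_zero hz1 hz3)]
  rw [this, one_smul]

/-- `𝓡₁₂(z)^{t₁}·R₂₁(z)^{t₁} = I₉`; equivalently the explicit matrix
`𝓡(z)` equals `[((R₂₁(z))^{t₁})⁻¹]^{t₁}`. -/
theorem statement_18 (z : ℂ) (h1 : z ^ 2 - z + 1 ≠ 0) (h2 : z ^ 3 ≠ 1) :
    pt1 (curlR z) * pt1 (flipP * RD3 z * flipP) = (1 : Matrix Idx9 Idx9 ℂ) ∧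
    curlR z = pt1 ((pt1 (flipP * RD3 z * flipP))⁻¹) := by
  refine ⟨part1 z h1 h2, ?_⟩
  rw [Matrix.inv_eq_left_inv (part1 z h1 h2)]
  rfl
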